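/- Let Ω : ℝ^D → ℝ be a convex function, A a real k×D matrix, y ∈ Δ^D, and η ∈ ℝ^k. Let y* ∈ Δ^D be a maximizer over Δ^D of f_Ω(y') := ηᵀAy' − Ω(y'). Then the vector A(y* − y) ∈ ℝ^k is a subgradient at η of the convex function η' ↦ ℓ_{Ω,A}(η', y) = Ω△*(Aᵀη') + Ω(y) − η'ᵀAy; that is, for all η' ∈ ℝ^k, ℓ_{Ω,A}(η', y) ≥ ℓ_{Ω,A}(η, y) + (A(y* − y))ᵀ(η' − η). -/

import Mathlib

open Matrix Set

/-- Fenchel conjugate of the restriction of `Ω` to the standard simplex. -/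
noncomputable def fenchelConjSimplex {D : ℕ} (Ω : (Fin D → ℝ) → ℝ)
    (θ : Fin D → ℝ) : ℝ :=
  sSup ((fun y => θ ⬝ᵥ y - Ω y) '' stdSimplex ℝ (Fin D))

lemma bddAbove_fy {D : ℕ} (Ω : (Fin D → ℝ) → ℝ)
    (hΩ : ConvexOn ℝ Set.univ Ω) (θ : Fin D → ℝ) :
    BddAbove ((fun y => θ ⬝ᵥ y - Ω y) '' stdSimplex ℝ (Fin D)) := by
  have hΩc : Continuous Ω :=
    continuousOn_univ.1 (hΩ.continuousOn isOpen_univ)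
  have hdot : Continuous fun y : Fin D → ℝ => θ ⬝ᵥ y := by
    unfold dotProduct
    exact continuous_finset_sum _ fun i _ => continuous_const.mul (continuous_apply i)
  have hcont : Continuous fun y : Fin D → ℝ => θ ⬝ᵥ y - Ω y := hdot.sub hΩc
  exact ((isCompact_stdSimplex ℝ (Fin D)).image hcont).bddAbove

/-- If `y* ∈ Δ^D` maximizes `f_Ω(y') = ηᵀAy' − Ω(y')` over the simplex, then
`A(y* − y)` is a subgradient at `η` of the convex map `η' ↦ ℓ_{Ω,A}(η', y)`. -/
theorem fenchelYoung_loss_subgradient {D k : ℕ} (Ω : (Fin D → ℝ) → ℝ)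
    (hΩ : ConvexOn ℝ Set.univ Ω) (A : Matrix (Fin k) (Fin D) ℝ)
    (y : Fin D → ℝ) (hy : y ∈ stdSimplex ℝ (Fin D)) (η : Fin k → ℝ)
    (ystar : Fin D → ℝ) (hystar : ystar ∈ stdSimplex ℝ (Fin D))
    (hmax : ∀ y' ∈ stdSimplex ℝ (Fin D),
      η ⬝ᵥ (A *ᵥ y') - Ω y' ≤ η ⬝ᵥ (A *ᵥ ystar) - Ω ystar) :
    ∀ η' : Fin k → ℝ,
      fenchelConjSimplex Ω (η' ᵥ* A) + Ω y - η' ⬝ᵥ (A *ᵥ y) ≥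
        (fenchelConjSimplex Ω (η ᵥ* A) + Ω y - η ⬝ᵥ (A *ᵥ y)) +
          (A *ᵥ (ystar - y)) ⬝ᵥ (η' - η) := by
  intro η'
  have key : ∀ θ : Fin k → ℝ, (θ ᵥ* A) ⬝ᵥ ystar - Ω ystar ≤
      fenchelConjSimplex Ω (θ ᵥ* A) := fun θ =>
    le_csSup (bddAbove_fy Ω hΩ _) ⟨ystar, hystar, rfl⟩
  have h1 := key η'
  have h2 : fenchelConjSimplex Ω (η ᵥ* A) = (η ᵥ* A) ⬝ᵥ ystar - Ω ystar := by
    refine le_antisymm ?_ (key η)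
    refine csSup_le ⟨_, ⟨ystar, hystar, rfl⟩⟩ ?_
    rintro x ⟨y', hy', rfl⟩
    simpa [Matrix.dotProduct_mulVec] using hmax y' hy'
  rw [h2] at *
  rw [Matrix.dotProduct_mulVec η', Matrix.dotProduct_mulVec η] at *
  have hexp : (A *ᵥ (ystar - y)) ⬝ᵥ (η' - η) =
      (η' ᵥ* A) ⬝ᵥ ystar - (η ᵥ* A) ⬝ᵥ ystar - (η' ᵥ* A) ⬝ᵥ y + (η ᵥ* A) ⬝ᵥ y := by
    rw [Matrix.mulVec_sub, sub_dotProduct]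
    rw [dotProduct_sub, dotProduct_sub]
    rw [dotProduct_comm (A *ᵥ ystar) η', dotProduct_comm (A *ᵥ ystar) η,
      dotProduct_comm (A *ᵥ y) η', dotProduct_comm (A *ᵥ y) η]
    rw [Matrix.dotProduct_mulVec, Matrix.dotProduct_mulVec,
      Matrix.dotProduct_mulVec, Matrix.dotProduct_mulVec]
    ring
  rw [hexp]
  linarith
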